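/- There exists a surjective unital K-algebra homomorphism ι_0 : Ξ_n(p) → IΛ_n(p) such that ι_0(ϑ_i) = θ_i for all i = 1, …, n. -/

import Mathlib

noncomputable section

open scoped BigOperators

/-- Commutator `[x, y] = x*y - y*x` in an associative ring. -/
def brk {A : Type*} [Ring A] (x y : A) : A := x * y - y * x

/-- The span of the generators of the free algebra on `ϑ_1, …, ϑ_n`. -/
def Espan (n : ℕ) : Submodule ℂ (FreeAlgebra ℂ (Fin n)) :=
  Submodule.span ℂ (Set.range (FreeAlgebra.ι ℂ))

/-- Defining relations of the para-algebra `Ξ_n(p)`: for all `ξ, η, ζ` in the span of the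
generators, `ξ^p·η + η·ξ^p = 0` and `[ξ, [η, ζ]] = 0`. -/
inductive XiRel (n p : ℕ) : FreeAlgebra ℂ (Fin n) → FreeAlgebra ℂ (Fin n) → Prop
  | anti : ∀ ξ η : FreeAlgebra ℂ (Fin n), ξ ∈ Espan n → η ∈ Espan n →
      XiRel n p (ξ ^ p * η + η * ξ ^ p) 0
  | central : ∀ ξ η ζ : FreeAlgebra ℂ (Fin n), ξ ∈ Espan n → η ∈ Espan n → ζ ∈ Espan n →
      XiRel n p (ξ * (η * ζ - ζ * η) - (η * ζ - ζ * η) * ξ) 0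

/-- The para-algebra `Ξ_n(p)` of order `p` and degree `n`. -/
abbrev Xi (n p : ℕ) : Type := RingQuot (XiRel n p)

/-- The generators `ϑ_i` of `Ξ_n(p)`. -/
def vth (n p : ℕ) (i : Fin n) : Xi n p :=
  RingQuot.mkAlgHom ℂ (XiRel n p) (FreeAlgebra.ι ℂ i)

/-- The span `E` of the generators `ϑ_1, …, ϑ_n` inside `Ξ_n(p)`. -/
def XiE (n p : ℕ) : Submodule ℂ (Xi n p) :=
  Submodule.span ℂ (Set.range (vth n p))

/-- Defining relations of the `ℤ₂^p`-graded commutative algebra `Λ_n(p)`: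
`θ_i^{(α)}·θ_j^{(β)} = (−1)^{δ_{αβ}}·θ_j^{(β)}·θ_i^{(α)}`. -/
inductive LamRel (n p : ℕ) : FreeAlgebra ℂ (Fin n × Fin p) → FreeAlgebra ℂ (Fin n × Fin p) → Prop
  | comm : ∀ (i j : Fin n) (α β : Fin p),
      LamRel n p (FreeAlgebra.ι ℂ (i, α) * FreeAlgebra.ι ℂ (j, β))
        ((if α = β then (-1 : ℂ) else 1) • (FreeAlgebra.ι ℂ (j, β) * FreeAlgebra.ι ℂ (i, α)))

/-- The algebra `Λ_n(p)`. -/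
abbrev Lam (n p : ℕ) : Type := RingQuot (LamRel n p)

/-- The generators `θ_i^{(α)}` of `Λ_n(p)`. -/
def θc (n p : ℕ) (i : Fin n) (α : Fin p) : Lam n p :=
  RingQuot.mkAlgHom ℂ (LamRel n p) (FreeAlgebra.ι ℂ (i, α))

/-- `θ_i = Σ_{α=1}^p θ_i^{(α)}`. -/
def θv (n p : ℕ) (i : Fin n) : Lam n p := ∑ α : Fin p, θc n p i α

/-- The inhomogeneous subalgebra `IΛ_n(p)` generated by `θ_1, …, θ_n`. -/
def ILam (n p : ℕ) : Subalgebra ℂ (Lam n p) :=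
  Algebra.adjoin ℂ (Set.range (θv n p))

/-- `Δ_i = Σ_{α=1}^p ∂_i^{(α)}`. -/
def Δop (n p : ℕ) (Dp : Fin n → Fin p → Module.End ℂ (Lam n p)) (i : Fin n) :
    Module.End ℂ (Lam n p) := ∑ α : Fin p, Dp i α

namespace Stmt6Aux

variable (n p : ℕ)

lemma theta_rel (i j : Fin n) (α β : Fin p) :
    θc n p i α * θc n p j β = (if α = β then (-1:ℂ) else 1) • (θc n p j β * θc n p i α) := by
  have h := RingQuot.mkAlgHom_rel ℂ (LamRel.comm (n := n) (p := p) i j α β)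
  rw [map_mul, map_smul, map_mul] at h
  exact h

lemma theta_anticomm_add (i j : Fin n) (α : Fin p) :
    θc n p i α * θc n p j α + θc n p j α * θc n p i α = 0 := by
  have h := theta_rel n p i j α α
  rw [if_pos rfl] at h
  rw [h]
  exact (congrArg (fun z => z + (θc n p j α * θc n p i α)) (neg_one_smul ℂ _)).trans
    (neg_add_cancel _)

lemma theta_commute (i j : Fin n) {α β : Fin p} (h : α ≠ β) :
    θc n p i α * θc n p j β = θc n p j β * θc n p i α := by
  have h' := theta_rel n p i j α β
  rw [if_neg h, one_smul] at h'
  exact h'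

/-- grade-α component of a linear combination of the `θv`. -/
def Acomp (c : Fin n → ℂ) (α : Fin p) : Lam n p := ∑ i, c i • θc n p i α

lemma sum_repr (c : Fin n → ℂ) : (∑ i, c i • θv n p i) = ∑ α, Acomp n p c α := by
  simp only [θv, Acomp, Finset.smul_sum]
  rw [Finset.sum_comm]

lemma A_mul_expand (c d : Fin n → ℂ) (α β : Fin p) :
    Acomp n p c α * Acomp n p d β = ∑ i, ∑ j, (c i * d j) • (θc n p i α * θc n p j β) := by
  rw [Acomp, Acomp, Finset.sum_mul]
  refine Finset.sum_congr rfl fun i _ => ?_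
  rw [Finset.mul_sum]
  refine Finset.sum_congr rfl fun j _ => ?_
  rw [smul_mul_assoc, mul_smul_comm, smul_smul]

lemma A_anticomm_add (c d : Fin n → ℂ) (α : Fin p) :
    Acomp n p c α * Acomp n p d α + Acomp n p d α * Acomp n p c α = 0 := by
  have h2 : (∑ i, ∑ j, (d i * c j) • (θc n p i α * θc n p j α))
      = ∑ i, ∑ j, (d j * c i) • (θc n p j α * θc n p i α) := Finset.sum_comm
  rw [A_mul_expand, A_mul_expand, h2, ← Finset.sum_add_distrib]
  refine Finset.sum_eq_zero fun i _ => ?_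
  rw [← Finset.sum_add_distrib]
  refine Finset.sum_eq_zero fun j _ => ?_
  rw [mul_comm (d j), ← smul_add, theta_anticomm_add n p i j α, smul_zero]

lemma A_anticomm (c d : Fin n → ℂ) (α : Fin p) :
    Acomp n p c α * Acomp n p d α = -(Acomp n p d α * Acomp n p c α) :=
  eq_neg_of_add_eq_zero_left (A_anticomm_add n p c d α)

lemma A_commute (c d : Fin n → ℂ) {α β : Fin p} (h : α ≠ β) :
    Commute (Acomp n p c α) (Acomp n p d β) := by
  show _ = _
  rw [A_mul_expand, A_mul_expand]
  conv_rhs => rw [Finset.sum_comm]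
  refine Finset.sum_congr rfl fun i _ => ?_
  refine Finset.sum_congr rfl fun j _ => ?_
  rw [theta_commute n p i j h, mul_comm (c i)]

lemma A_sq (c : Fin n → ℂ) (α : Fin p) : Acomp n p c α * Acomp n p c α = 0 := by
  have h := A_anticomm_add n p c c α
  have h2 : (2:ℂ) • (Acomp n p c α * Acomp n p c α) = 0 := by
    rw [two_smul]
    exact h
  rcases smul_eq_zero.mp h2 with h' | h'
  · norm_num at h'
  · exact h'

def Pprod (c : Fin n → ℂ) (s : Finset (Fin p)) : Lam n p :=
  s.noncommProd (Acomp n p c) (fun α _ β _ hne => A_commute n p c c hne)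

lemma Pprod_mul_A (c : Fin n → ℂ) (s : Finset (Fin p)) (α : Fin p) :
    Pprod n p c s * Acomp n p c α =
      if α ∈ s then 0 else Pprod n p c (insert α s) := by
  classical
  by_cases h : α ∈ s
  · rw [if_pos h]
    rw [Pprod, ← Finset.mul_noncommProd_erase s h _ (fun x _ y _ hxy => A_commute n p c c hxy)]
    have hc : Commute (Acomp n p c α) ((s.erase α).noncommProd (Acomp n p c)
        (fun x hx y hy hxy => A_commute n p c c hxy)) := by
      refine Finset.noncommProd_commute _ _ _ _ fun x hx => ?_
      exact A_commute n p c c (Ne.symm (Finset.ne_of_mem_erase hx))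
    rw [mul_assoc, ← hc.eq, ← mul_assoc, A_sq, zero_mul]
  · rw [if_neg h, Pprod, Pprod]; refine Eq.trans ?_ (Finset.noncommProd_insert_of_notMem _ _ _ _ h).symm
    have hc : Commute (Acomp n p c α) (s.noncommProd (Acomp n p c)
        (fun x hx y hy hxy => A_commute n p c c hxy)) := by
      refine Finset.noncommProd_commute _ _ _ _ fun x hx => ?_
      exact A_commute n p c c (Ne.symm (fun he : x = α => h (he ▸ hx)))
    rw [← hc.eq]

lemma pow_mem_span (c : Fin n → ℂ) (k : ℕ) :
    (∑ α, Acomp n p c α) ^ k ∈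
      Submodule.span ℂ (Pprod n p c '' {s : Finset (Fin p) | s.card = k}) := by
  classical
  induction k with
  | zero =>
    refine Submodule.subset_span ⟨∅, rfl, ?_⟩
    rw [pow_zero, Pprod]; exact Finset.noncommProd_empty _ _
  | succ k ih =>
    rw [pow_succ]
    have hmap : Submodule.span ℂ (Pprod n p c '' {s : Finset (Fin p) | s.card = k}) ≤
        Submodule.comap (LinearMap.mulRight ℂ (∑ α, Acomp n p c α))
          (Submodule.span ℂ (Pprod n p c '' {s : Finset (Fin p) | s.card = k + 1})) := by
      rw [Submodule.span_le]
      rintro _ ⟨s, hs, rfl⟩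
      simp only [SetLike.mem_coe, Submodule.mem_comap, LinearMap.mulRight_apply]
      rw [Finset.mul_sum]
      refine Submodule.sum_mem _ fun α _ => ?_
      rw [Pprod_mul_A]
      by_cases h : α ∈ s
      · rw [if_pos h]; exact Submodule.zero_mem _
      · rw [if_neg h]
        refine Submodule.subset_span ⟨insert α s, ?_, rfl⟩
        simp only [Set.mem_setOf_eq] at hs ⊢
        rw [Finset.card_insert_of_notMem h, hs]
    exact hmap ih

lemma Puniv_anticomm_add (c d : Fin n → ℂ) (β : Fin p) :
    Pprod n p c Finset.univ * Acomp n p d β + Acomp n p d β * Pprod n p c Finset.univ = 0 := by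
  classical
  have hmem : β ∈ (Finset.univ : Finset (Fin p)) := Finset.mem_univ β
  have hP : Acomp n p c β * ((Finset.univ.erase β).noncommProd (Acomp n p c)
      (fun x hx y hy hxy => A_commute n p c c hxy)) = Pprod n p c Finset.univ :=
    Finset.mul_noncommProd_erase Finset.univ hmem _ _
  set P' := (Finset.univ.erase β).noncommProd (Acomp n p c)
      (fun x hx y hy hxy => A_commute n p c c hxy) with hP'
  have hc : Commute (Acomp n p d β) P' := by
    refine Finset.noncommProd_commute _ _ _ _ fun x hx => ?_
    exact (A_commute n p c d (Finset.ne_of_mem_erase hx)).symm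
  calc Pprod n p c Finset.univ * Acomp n p d β + Acomp n p d β * Pprod n p c Finset.univ
      = Acomp n p c β * (P' * Acomp n p d β) + Acomp n p d β * (Acomp n p c β * P') := by
        rw [← hP, mul_assoc]
    _ = Acomp n p c β * (Acomp n p d β * P') + Acomp n p d β * (Acomp n p c β * P') := by
        rw [← hc.eq]
    _ = (Acomp n p c β * Acomp n p d β) * P' + (Acomp n p d β * Acomp n p c β) * P' := by
        rw [← mul_assoc, ← mul_assoc]
    _ = (Acomp n p c β * Acomp n p d β + Acomp n p d β * Acomp n p c β) * P' :=
        (add_mul _ _ _).symm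
    _ = 0 * P' := by rw [A_anticomm_add]
    _ = 0 := zero_mul P'

lemma main_anti (c d : Fin n → ℂ) :
    (∑ α, Acomp n p c α) ^ p * (∑ β, Acomp n p d β)
      + (∑ β, Acomp n p d β) * (∑ α, Acomp n p c α) ^ p = 0 := by
  classical
  have hspan := pow_mem_span n p c p
  have hset : {s : Finset (Fin p) | s.card = p} = {Finset.univ} := by
    ext s
    simp only [Set.mem_setOf_eq, Set.mem_singleton_iff]
    constructor
    · intro h; exact Finset.eq_univ_of_card s (by simpa using h)
    · rintro rfl; simp
  rw [hset, Set.image_singleton] at hspan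
  obtain ⟨t, ht⟩ := Submodule.mem_span_singleton.mp hspan
  set P := Pprod n p c Finset.univ with hPdef
  set B := ∑ β, Acomp n p d β with hBdef
  have hkey : P * B + B * P = 0 := by
    rw [hBdef, Finset.mul_sum, Finset.sum_mul, ← Finset.sum_add_distrib]
    exact Finset.sum_eq_zero fun β _ => Puniv_anticomm_add n p c d β
  calc (∑ α, Acomp n p c α) ^ p * B + B * (∑ α, Acomp n p c α) ^ p
      = (t • P) * B + B * (t • P) := by rw [← ht]
    _ = t • (P * B) + t • (B * P) := by rw [smul_mul_assoc, mul_smul_comm]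
    _ = t • (P * B + B * P) := (smul_add _ _ _).symm
    _ = t • (0 : Lam n p) := by rw [hkey]
    _ = 0 := smul_zero t

lemma A_comm_prod (a b c : Fin n → ℂ) (α β : Fin p) :
    Commute (Acomp n p a α) (Acomp n p b β * Acomp n p c β - Acomp n p c β * Acomp n p b β) := by
  by_cases h : α = β
  · subst h
    have key : ∀ x y : Lam n p,
        Acomp n p a α * x + x * Acomp n p a α = 0 →
        Acomp n p a α * y + y * Acomp n p a α = 0 →
        Commute (Acomp n p a α) (x * y) := by
      intro x y hx hy
      set A := Acomp n p a α with hA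
      have e3 : (A*x)*y + (x*A)*y = 0 := by
        rw [← add_mul, hx, zero_mul]
      have e4 : x*(A*y) + x*(y*A) = 0 := by
        rw [← mul_add, hy, mul_zero]
      have e5 : (A*x)*y + (x*A)*y = x*(A*y) + x*(y*A) := e3.trans e4.symm
      rw [mul_assoc x A y, add_comm (x*(A*y)) (x*(y*A))] at e5
      have e6 : (A*x)*y = x*(y*A) := add_right_cancel e5
      show A * (x*y) = (x*y) * A
      rw [← mul_assoc, e6, mul_assoc]
    exact (key _ _ (A_anticomm_add n p a b α) (A_anticomm_add n p a c α)).sub_right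
      (key _ _ (A_anticomm_add n p a c α) (A_anticomm_add n p a b α))
  · have h1 := (A_commute n p a b h).mul_right (A_commute n p a c h)
    have h2 := (A_commute n p a c h).mul_right (A_commute n p a b h)
    exact h1.sub_right h2

lemma main_central (a b c : Fin n → ℂ) :
    Commute (∑ α, Acomp n p a α)
      ((∑ β, Acomp n p b β) * (∑ γ, Acomp n p c γ)
        - (∑ γ, Acomp n p c γ) * (∑ β, Acomp n p b β)) := by
  classical
  have h1 : (∑ β, Acomp n p b β) * (∑ γ, Acomp n p c γ)
      = ∑ β, ∑ γ, Acomp n p b β * Acomp n p c γ := by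
    rw [Finset.sum_mul]
    exact Finset.sum_congr rfl fun _ _ => Finset.mul_sum _ _ _
  have h2 : (∑ γ, Acomp n p c γ) * (∑ β, Acomp n p b β)
      = ∑ β, ∑ γ, Acomp n p c γ * Acomp n p b β := by
    rw [Finset.sum_mul]
    simp only [Finset.mul_sum]
    exact Finset.sum_comm
  have hexp : (∑ β, Acomp n p b β) * (∑ γ, Acomp n p c γ)
      - (∑ γ, Acomp n p c γ) * (∑ β, Acomp n p b β)
      = ∑ β, (Acomp n p b β * Acomp n p c β - Acomp n p c β * Acomp n p b β) := by
    rw [h1, h2]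
    refine (Finset.sum_sub_distrib _ _).symm.trans (Finset.sum_congr rfl fun β _ => ?_)
    refine (Finset.sum_sub_distrib _ _).symm.trans ?_
    exact Finset.sum_eq_single_of_mem β (Finset.mem_univ β)
      (fun γ _ hne => sub_eq_zero_of_eq ((A_commute n p b c (Ne.symm hne)).eq))
  rw [hexp]
  refine Commute.sum_left _ _ _ fun α _ => ?_
  refine Commute.sum_right _ _ _ fun β _ => ?_
  exact A_comm_prod n p a b c α β

end Stmt6Aux

open Stmt6Aux

/-- There is a unital algebra homomorphism `ι_0 : Ξ_n(p) → Λ_n(p)` with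
`ι_0(ϑ_i) = θ_i` for all `i`, whose range is exactly the subalgebra `IΛ_n(p)`
(i.e. `ι_0` is surjective onto `IΛ_n(p)`). -/
theorem stmt_6 (n p : ℕ) (hn : 0 < n) (hp : 0 < p) :
    ∃ ι₀ : Xi n p →ₐ[ℂ] Lam n p,
      (∀ i, ι₀ (vth n p i) = θv n p i) ∧ ι₀.range = ILam n p := by
  classical
  set F : FreeAlgebra ℂ (Fin n) →ₐ[ℂ] Lam n p :=
    FreeAlgebra.lift ℂ (fun i => θv n p i) with hF
  have hFι : ∀ i, F (FreeAlgebra.ι ℂ i) = θv n p i := fun i => by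
    rw [hF, FreeAlgebra.lift_ι_apply]
  have hmem : ∀ x : FreeAlgebra ℂ (Fin n), x ∈ Espan n →
      ∃ c : Fin n → ℂ, F x = ∑ α, Acomp n p c α := by
    intro x hx
    have h1 : F x ∈ Submodule.span ℂ (Set.range (θv n p)) := by
      have h2 := Submodule.mem_map_of_mem (f := F.toLinearMap) hx
      rw [Espan, Submodule.map_span] at h2
      have heq : F.toLinearMap '' Set.range (FreeAlgebra.ι ℂ) = Set.range (θv n p) := by
        rw [← Set.range_comp]
        exact congrArg Set.range (funext fun i => hFι i)
      rwa [heq] at h2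
    obtain ⟨c, hc⟩ := (Submodule.mem_span_range_iff_exists_fun ℂ).mp h1
    exact ⟨c, by rw [← hc]; exact sum_repr n p c⟩
  have hrel : ∀ ⦃x y⦄, XiRel n p x y → F x = F y := by
    intro x y h
    induction h with
    | anti ξ η hξ hη =>
      obtain ⟨c, hc⟩ := hmem ξ hξ
      obtain ⟨d, hd⟩ := hmem η hη
      rw [map_zero, map_add, map_mul, map_mul, map_pow, hc, hd]
      exact main_anti n p c d
    | central ξ η ζ hξ hη hζ =>
      obtain ⟨a, ha⟩ := hmem ξ hξ
      obtain ⟨b, hb⟩ := hmem η hη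
      obtain ⟨c, hc⟩ := hmem ζ hζ
      rw [map_zero, map_sub, map_mul, map_mul, map_sub, map_mul, map_mul, ha, hb, hc]
      exact sub_eq_zero_of_eq (main_central n p a b c).eq
  refine ⟨RingQuot.liftAlgHom ℂ ⟨F, hrel⟩, ?_, ?_⟩
  · intro i
    rw [vth, RingQuot.liftAlgHom_mkAlgHom_apply]
    exact hFι i
  · have hι : ∀ i, (RingQuot.liftAlgHom ℂ ⟨F, hrel⟩) (vth n p i) = θv n p i := fun i => by
      rw [vth, RingQuot.liftAlgHom_mkAlgHom_apply]; exact hFι i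
    have hgen : Algebra.adjoin ℂ (Set.range (vth n p)) = ⊤ := by
      have hr : Set.range (vth n p) =
          (RingQuot.mkAlgHom ℂ (XiRel n p)) '' Set.range (FreeAlgebra.ι ℂ) := by
        rw [← Set.range_comp]; rfl
      rw [hr, ← AlgHom.map_adjoin, FreeAlgebra.adjoin_range_ι, Algebra.map_top]
      exact (AlgHom.range_eq_top _).mpr (RingQuot.mkAlgHom_surjective ℂ _)
    rw [← Algebra.map_top, ← hgen, AlgHom.map_adjoin, ILam]
    congr 1
    rw [← Set.range_comp]
    exact congrArg Set.range (funext fun i => hι i)
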